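/- With notation as in the distance bounding setting: ‖x − y‖² − ‖Y(x) − Y(y)‖² = 2δ(x)δ(y)(1 − cos φ), where φ is the angle between the residual vectors x − q(p(x)) and y − q(p(y)) (assuming both residuals are nonzero). Equivalently, ‖x − y‖² − ‖Y(x) − Y(y)‖² = 2(δ(x)δ(y) − ⟨x − q(p(x)), y − q(p(y))⟩). -/

import Mathlib

noncomputable section
open Matrix

/-- Projection map p(v) = Pᵀ(v − c). -/
noncomputable def proj {n m : ℕ} (P : Matrix (Fin n) (Fin m) ℝ)
    (c v : EuclideanSpace ℝ (Fin n)) : EuclideanSpace ℝ (Fin m) :=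
  Matrix.toEuclideanLin Pᵀ (v - c)

/-- Generalized inverse q(z) = Pz + c. -/
noncomputable def qinv {n m : ℕ} (P : Matrix (Fin n) (Fin m) ℝ)
    (c : EuclideanSpace ℝ (Fin n)) (z : EuclideanSpace ℝ (Fin m)) :
    EuclideanSpace ℝ (Fin n) :=
  Matrix.toEuclideanLin P z + c

/-- Projection distance δ(v) = ‖v − q(p(v))‖. -/
noncomputable def pdist {n m : ℕ} (P : Matrix (Fin n) (Fin m) ℝ)
    (c v : EuclideanSpace ℝ (Fin n)) : ℝ :=
  ‖v - qinv P c (proj P c v)‖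


/-- Compressed feature Y(v) = (p(v), δ(v)) with the ℓ² product norm,
so ‖Y(x) − Y(y)‖² = ‖p(x) − p(y)‖² + (δ(x) − δ(y))². -/
noncomputable def compFeat {n m : ℕ} (P : Matrix (Fin n) (Fin m) ℝ)
    (c v : EuclideanSpace ℝ (Fin n)) : WithLp 2 (EuclideanSpace ℝ (Fin m) × ℝ) :=
  (WithLp.equiv 2 _).symm (proj P c v, pdist P c v)

lemma inner_toEuclideanLin_left {n m : ℕ} (P : Matrix (Fin n) (Fin m) ℝ)
    (z : EuclideanSpace ℝ (Fin m)) (w : EuclideanSpace ℝ (Fin n)) :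
    (inner ℝ (Matrix.toEuclideanLin P z) w : ℝ) = inner ℝ z (Matrix.toEuclideanLin Pᵀ w) := by
  have h : Matrix.toEuclideanLin Pᵀ = LinearMap.adjoint (Matrix.toEuclideanLin P) := by
    rw [← Matrix.toEuclideanLin_conjTranspose_eq_adjoint,
      Matrix.conjTranspose_eq_transpose_of_trivial]
  rw [h, LinearMap.adjoint_inner_right]

lemma residual_orth {n m : ℕ} (P : Matrix (Fin n) (Fin m) ℝ)
    (hP : Pᵀ * P = 1) (c v : EuclideanSpace ℝ (Fin n))
    (z : EuclideanSpace ℝ (Fin m)) :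
    (inner ℝ (Matrix.toEuclideanLin P z) (v - qinv P c (proj P c v)) : ℝ) = 0 := by
  rw [inner_toEuclideanLin_left]
  have : Matrix.toEuclideanLin Pᵀ (v - qinv P c (proj P c v)) = 0 := by
    have hcomp : ∀ w, Matrix.toEuclideanLin Pᵀ (Matrix.toEuclideanLin P w) = w := by
      intro w
      simp [Matrix.toEuclideanLin_apply, Matrix.mulVec_mulVec, hP, Matrix.one_mulVec]
    simp only [qinv]
    rw [map_sub, map_add, hcomp, proj, map_sub]
    abel
  rw [this, inner_zero_right]

theorem compressed_distance_error {n m : ℕ} (P : Matrix (Fin n) (Fin m) ℝ)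
    (hP : Pᵀ * P = 1) (c x y : EuclideanSpace ℝ (Fin n))
    (hx : x - qinv P c (proj P c x) ≠ 0) (hy : y - qinv P c (proj P c y) ≠ 0) :
    ‖x - y‖ ^ 2 - ‖compFeat P c x - compFeat P c y‖ ^ 2 =
      2 * pdist P c x * pdist P c y *
        (1 - (inner ℝ (x - qinv P c (proj P c x)) (y - qinv P c (proj P c y)) : ℝ) /
          (pdist P c x * pdist P c y)) ∧
    ‖x - y‖ ^ 2 - ‖compFeat P c x - compFeat P c y‖ ^ 2 =
      2 * (pdist P c x * pdist P c y -
        (inner ℝ (x - qinv P c (proj P c x)) (y - qinv P c (proj P c y)) : ℝ)) := by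
  set rx := x - qinv P c (proj P c x) with hrx
  set ry := y - qinv P c (proj P c y) with hry
  set d : EuclideanSpace ℝ (Fin m) := proj P c x - proj P c y with hd
  have hdecomp : x - y = Matrix.toEuclideanLin P d + (rx - ry) := by
    simp only [hrx, hry, hd, qinv, map_sub]
    abel
  have hPnorm : ‖Matrix.toEuclideanLin P d‖ ^ 2 = ‖d‖ ^ 2 := by
    rw [← real_inner_self_eq_norm_sq, ← real_inner_self_eq_norm_sq,
      inner_toEuclideanLin_left]
    congr 1
    simp [Matrix.toEuclideanLin_apply, Matrix.mulVec_mulVec, hP, Matrix.one_mulVec]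
  have horth : (inner ℝ (Matrix.toEuclideanLin P d) (rx - ry) : ℝ) = 0 := by
    rw [inner_sub_right, hrx, hry, residual_orth P hP c x, residual_orth P hP c y]
    ring
  have hxy : ‖x - y‖ ^ 2 = ‖d‖ ^ 2 + ‖rx - ry‖ ^ 2 := by
    rw [hdecomp, norm_add_sq_real, horth, hPnorm]
    ring
  have hres : ‖rx - ry‖ ^ 2 =
      pdist P c x ^ 2 - 2 * (inner ℝ rx ry : ℝ) + pdist P c y ^ 2 := by
    rw [norm_sub_sq_real]
    simp [pdist, ← hrx, ← hry]
  have hfeat : ‖compFeat P c x - compFeat P c y‖ ^ 2 =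
      ‖d‖ ^ 2 + (pdist P c x - pdist P c y) ^ 2 := by
    rw [WithLp.prod_norm_sq_eq_of_L2]
    have h1 : (compFeat P c x - compFeat P c y).fst = d := rfl
    have h2 : (compFeat P c x - compFeat P c y).snd = pdist P c x - pdist P c y := rfl
    rw [h1, h2, Real.norm_eq_abs, sq_abs]
  have key : ‖x - y‖ ^ 2 - ‖compFeat P c x - compFeat P c y‖ ^ 2 =
      2 * (pdist P c x * pdist P c y - (inner ℝ rx ry : ℝ)) := by
    rw [hxy, hres, hfeat]; ring
  refine ⟨?_, key⟩
  have hdx : pdist P c x ≠ 0 := by simpa [pdist, ← hrx] using hx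
  have hdy : pdist P c y ≠ 0 := by simpa [pdist, ← hry] using hy
  rw [key]
  field_simp
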